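/- Let m, δ > 0 with δm > 2, set u*² = 3δm − 1 − √(8(δm)² − 8δm) and k² = (1/δ)(√(2(δm)² − 2δm) − δm). Then m − k² = ½[m + (1/δ)(1 + u*²)] > 0 and m − 2k² = (1/δ)(1 + u*²) > 0. -/

import Mathlib

/-- At the Turing point of the Klausmeier–Gray–Scott model,
m − k² = ½[m + (1/δ)(1 + u*²)] > 0 and m − 2k² = (1/δ)(1 + u*²) > 0. -/
theorem stmt_13 (m δ : ℝ) (hm : 0 < m) (hδ : 0 < δ) (h2 : 2 < δ * m) :
    m - (1 / δ) * (Real.sqrt (2 * (δ * m) ^ 2 - 2 * (δ * m)) - δ * m) =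
      (1 / 2) * (m + (1 / δ) *
        (1 + (3 * (δ * m) - 1 - Real.sqrt (8 * (δ * m) ^ 2 - 8 * (δ * m))))) ∧
    0 < m - (1 / δ) * (Real.sqrt (2 * (δ * m) ^ 2 - 2 * (δ * m)) - δ * m) ∧
    m - 2 * ((1 / δ) * (Real.sqrt (2 * (δ * m) ^ 2 - 2 * (δ * m)) - δ * m)) =
      (1 / δ) *
        (1 + (3 * (δ * m) - 1 - Real.sqrt (8 * (δ * m) ^ 2 - 8 * (δ * m)))) ∧
    0 < m - 2 * ((1 / δ) * (Real.sqrt (2 * (δ * m) ^ 2 - 2 * (δ * m)) - δ * m)) := by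
  set s := δ * m with hs
  have hs2 : 2 < s := h2
  have hs0 : 0 < s := by linarith
  have hnn : 0 ≤ 2 * s ^ 2 - 2 * s := by nlinarith
  have h8 : 8 * s ^ 2 - 8 * s = 2 ^ 2 * (2 * s ^ 2 - 2 * s) := by ring
  have h8s : Real.sqrt (8 * s ^ 2 - 8 * s) = 2 * Real.sqrt (2 * s ^ 2 - 2 * s) := by
    rw [h8, Real.sqrt_mul (by positivity), Real.sqrt_sq (by norm_num)]
  set r := Real.sqrt (2 * s ^ 2 - 2 * s) with hr
  have hr0 : 0 ≤ r := Real.sqrt_nonneg _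
  have hrsq : r ^ 2 = 2 * s ^ 2 - 2 * s := Real.sq_sqrt hnn
  have hrlt : r < 2 * s := by
    nlinarith [Real.sq_sqrt hnn, Real.sqrt_nonneg (2 * s ^ 2 - 2 * s)]
  have h2rlt : 2 * r < 3 * s := by nlinarith
  have hm' : m = s / δ := by field_simp [hs]; linarith [hs, mul_comm m δ]
  refine ⟨?_, ?_, ?_, ?_⟩
  · rw [h8s, hm']; field_simp; ring
  · rw [hm']
    have e : s / δ - (1 / δ) * (r - s) = (2 * s - r) / δ := by field_simp; ring
    rw [e]; exact div_pos (by linarith) hδ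
  · rw [h8s, hm']; field_simp; ring
  · rw [hm']
    have e : s / δ - 2 * ((1 / δ) * (r - s)) = (3 * s - 2 * r) / δ := by field_simp; ring
    rw [e]; exact div_pos (by linarith) hδ
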